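/- Let s₁, s₂, s₃ ∈ ℝ satisfy s₁²s₂² - 4s₁³s₃ - 4s₂³ + 18s₁s₂s₃ - 27s₃² > 0. Then s₁² - 3s₂ > 0 and |2s₁³ - 9s₁s₂ + 27s₃| < 2(s₁² - 3s₂)^{3/2}. -/

import Mathlib

theorem stmt_11 (s₁ s₂ s₃ : ℝ)
    (hdisc : s₁ ^ 2 * s₂ ^ 2 - 4 * s₁ ^ 3 * s₃ - 4 * s₂ ^ 3 + 18 * s₁ * s₂ * s₃
      - 27 * s₃ ^ 2 > 0) :
    s₁ ^ 2 - 3 * s₂ > 0 ∧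
    |2 * s₁ ^ 3 - 9 * s₁ * s₂ + 27 * s₃| < 2 * (s₁ ^ 2 - 3 * s₂) ^ ((3 : ℝ) / 2) := by
  set p := s₁ ^ 2 - 3 * s₂ with hpdef
  set q := 2 * s₁ ^ 3 - 9 * s₁ * s₂ + 27 * s₃ with hqdef
  have hid : 4 * p ^ 3 - q ^ 2 = 27 * (s₁ ^ 2 * s₂ ^ 2 - 4 * s₁ ^ 3 * s₃ - 4 * s₂ ^ 3
      + 18 * s₁ * s₂ * s₃ - 27 * s₃ ^ 2) := by rw [hpdef, hqdef]; ring
  have key : q ^ 2 < 4 * p ^ 3 := by linarith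
  have hp : 0 < p := by nlinarith [sq_nonneg p, sq_nonneg q]
  refine ⟨hp, ?_⟩
  have hsq : (p ^ ((3 : ℝ) / 2)) ^ 2 = p ^ 3 := by
    rw [← Real.rpow_natCast (p ^ ((3 : ℝ) / 2)) 2, ← Real.rpow_mul hp.le]
    norm_num
  have hpos : 0 ≤ 2 * p ^ ((3 : ℝ) / 2) := by positivity
  refine lt_of_pow_lt_pow_left₀ 2 hpos ?_
  rw [sq_abs]
  nlinarith [hsq]
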